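/- For a Hermitian PSD matrix V with unit diagonal ([V]_{m,m}=1 for all m), the penalty ‖V‖_* − ‖V‖_2 = M − λ_max(V) is nonnegative, and equals zero if and only if rank(V) = 1. -/

import Mathlib

open Matrix ComplexOrder

/-- For a Hermitian PSD matrix with unit diagonal, the penalty
`‖V‖_* − ‖V‖₂ = M − λ_max(V)` is nonnegative, and vanishes iff `rank V = 1`. -/
theorem stmt_14 {M : ℕ} [NeZero M] (V : Matrix (Fin M) (Fin M) ℂ)
    (hV : V.PosSemidef) (hdiag : ∀ m, V m m = 1) :
    ((∑ i, |hV.isHermitian.eigenvalues i|) - (⨆ i, hV.isHermitian.eigenvalues i)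
        = (M : ℝ) - ⨆ i, hV.isHermitian.eigenvalues i) ∧
    (0 ≤ (∑ i, |hV.isHermitian.eigenvalues i|) - ⨆ i, hV.isHermitian.eigenvalues i) ∧
    ((∑ i, |hV.isHermitian.eigenvalues i|) - (⨆ i, hV.isHermitian.eigenvalues i) = 0
      ↔ V.rank = 1) := by
  have hM : 0 < M := Nat.pos_of_ne_zero (NeZero.ne M)
  set μ := hV.isHermitian.eigenvalues with hμ
  have hnn : ∀ i, 0 ≤ μ i := hV.eigenvalues_nonneg
  have habs : ∀ i, |μ i| = μ i := fun i => abs_of_nonneg (hnn i)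
  -- trace computations
  have htr : V.trace = (M : ℂ) := by
    simp [Matrix.trace, Matrix.diag, hdiag]
  have htr2 : V.trace = ∑ i, (μ i : ℂ) := by
    conv_lhs => rw [hV.isHermitian.spectral_theorem]
    rw [Unitary.conjStarAlgAut_apply, Matrix.trace_mul_cycle,
      (Matrix.mem_unitaryGroup_iff').mp (hV.isHermitian.eigenvectorUnitary).2, Matrix.one_mul]
    simp [Matrix.trace_diagonal, hμ]
  have hsum : ∑ i, μ i = (M : ℝ) := by
    have : ((∑ i, μ i : ℝ) : ℂ) = ((M : ℝ) : ℂ) := by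
      push_cast
      rw [← htr2, htr]
    exact_mod_cast this
  have hsumabs : ∑ i, |μ i| = (M : ℝ) := by
    rw [Finset.sum_congr rfl fun i _ => habs i, hsum]
  -- sup is attained
  obtain ⟨i0, hi0⟩ := Finite.exists_max μ
  have hS : (⨆ i, μ i) = μ i0 :=
    le_antisymm (ciSup_le hi0) (le_ciSup (Set.Finite.bddAbove (Set.finite_range μ)) i0)
  have hle : μ i0 ≤ ∑ i, μ i :=
    Finset.single_le_sum (fun i _ => hnn i) (Finset.mem_univ i0)
  refine ⟨by rw [hsumabs], by rw [hsumabs, hS]; linarith [hle, hsum ▸ hle], ?_⟩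
  rw [hsumabs, hS, sub_eq_zero]
  have hrank := hV.isHermitian.rank_eq_card_non_zero_eigs
  constructor
  · intro h
    -- μ i0 = M, so all other eigenvalues are 0
    have hzero : ∀ j, j ≠ i0 → μ j = 0 := by
      intro j hj
      have hsum' : μ i0 + ∑ k ∈ Finset.univ.erase i0, μ k = (M : ℝ) := by
        rw [← hsum, Finset.add_sum_erase _ _ (Finset.mem_univ i0)]
      have h0 : ∑ k ∈ Finset.univ.erase i0, μ k = 0 := by linarith [h.symm ▸ hsum']
      have := (Finset.sum_eq_zero_iff_of_nonneg (fun k _ => hnn k)).mp h0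
      exact this j (Finset.mem_erase.mpr ⟨hj, Finset.mem_univ j⟩)
    rw [hrank, Fintype.card_subtype]
    rw [show (Finset.univ.filter fun i => μ i ≠ 0) = {i0} from ?_]
    · simp
    · ext j
      simp only [Finset.mem_filter, Finset.mem_univ, true_and, Finset.mem_singleton]
      constructor
      · intro hj
        by_contra hne
        exact hj (hzero j hne)
      · rintro rfl
        rw [← h]
        positivity
  · intro h
    rw [hrank, Fintype.card_eq_one_iff] at h
    obtain ⟨⟨i1, hi1⟩, huniq⟩ := h
    have hzero : ∀ j, j ≠ i1 → μ j = 0 := by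
      intro j hj
      by_contra hne
      exact hj (congrArg Subtype.val (huniq ⟨j, hne⟩))
    have hμi1 : μ i1 = (M : ℝ) := by
      rw [← hsum, Finset.sum_eq_single i1]
      · exact fun b _ hb => hzero b hb
      · simp
    have : i0 = i1 := by
      by_contra hne
      have := hzero i0 hne
      have h1 : μ i1 ≤ μ i0 := hi0 i1
      rw [this, hμi1] at h1
      exact absurd h1 (by exact_mod_cast not_le.mpr (by exact_mod_cast hM))
    rw [this, hμi1]
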